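/- arXiv:2109.12892 — 2 statements merged into one kernel-verified Lean document; each statement's English description precedes it below -/
import Mathlib

section
/- Let n ≥ 2 be an integer. The set of values gcd(γ − 1, n) as γ ranges over integers coprime to n equals the set of all divisors of n if n is odd, and the set of all even divisors of n if n is even. -/
lemma aux_gcd_mul {a b : ℕ} (h : Nat.Coprime a b) (k : ℕ) :
    Nat.gcd k (a * b) = Nat.gcd k a * Nat.gcd k b := by
  apply Nat.dvd_antisymm
  · set g := Nat.gcd k (a * b) with hg
    have h1 : Nat.gcd g a ∣ Nat.gcd k a :=
      Nat.dvd_gcd ((Nat.gcd_dvd_left g a).trans (Nat.gcd_dvd_left k _)) (Nat.gcd_dvd_right g a)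
    have h2 : Nat.gcd g b ∣ Nat.gcd k b :=
      Nat.dvd_gcd ((Nat.gcd_dvd_left g b).trans (Nat.gcd_dvd_left k _)) (Nat.gcd_dvd_right g b)
    exact (Nat.dvd_gcd_mul_gcd_iff_dvd_mul.mpr (Nat.gcd_dvd_right k (a * b))).trans
      (mul_dvd_mul h1 h2)
  · have hco : Nat.Coprime (Nat.gcd k a) (Nat.gcd k b) :=
      Nat.Coprime.coprime_dvd_left (Nat.gcd_dvd_right k a)
        (Nat.Coprime.coprime_dvd_right (Nat.gcd_dvd_right k b) h)
    refine Nat.dvd_gcd (hco.mul_dvd_of_dvd_of_dvd (Nat.gcd_dvd_left _ _) (Nat.gcd_dvd_left _ _)) ?_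
    exact mul_dvd_mul (Nat.gcd_dvd_right _ _) (Nat.gcd_dvd_right _ _)

lemma aux_gcd_congr {a b : ℤ} {n : ℕ} (h : (n : ℤ) ∣ (a - b)) : Int.gcd a n = Int.gcd b n := by
  have key : ∀ x y : ℤ, (n : ℤ) ∣ (x - y) → Int.gcd x n ∣ Int.gcd y n := by
    intro x y hxy
    have h1 : (↑(Int.gcd x n) : ℤ) ∣ y := by
      have h2 : (↑(Int.gcd x n) : ℤ) ∣ (x - y) := (Int.gcd_dvd_right _ _).trans hxy
      have h3 := dvd_sub (Int.gcd_dvd_left (a := x) (b := (n:ℤ))) h2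
      simpa using h3
    exact Int.ofNat_dvd.mp (Int.dvd_coe_gcd h1 (Int.gcd_dvd_right _ _))
  exact Nat.dvd_antisymm (key a b h) (key b a (by simpa using (dvd_neg.mpr h)))

lemma aux_int_gcd_nat (x : ℤ) (a : ℕ) : Int.gcd x (a : ℤ) = Nat.gcd x.natAbs a := by
  simp [Int.gcd]

lemma aux_pp {p k a : ℕ} (hp : p.Prime) (hk : 1 ≤ k) (ha : a ≤ k) (h2 : p = 2 → 1 ≤ a) :
    ∃ γ : ℤ, Int.gcd γ ((p ^ k : ℕ) : ℤ) = 1 ∧ Int.gcd (γ - 1) ((p ^ k : ℕ) : ℤ) = p ^ a := by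
  rcases eq_or_lt_of_le ha with rfl | hak
  · refine ⟨1, by simp, ?_⟩
    rw [sub_self, Int.gcd_zero_left]
    simp [Int.natAbs_pow]
  · refine ⟨((1 + p ^ a : ℕ) : ℤ), ?_, ?_⟩
    · rw [Int.gcd_natCast_natCast]
      have hnd : ¬ p ∣ (1 + p ^ a) := by
        rcases Nat.eq_zero_or_pos a with rfl | hap
        · simp only [pow_zero]
          intro hdvd
          have hp2 : p = 2 := (Nat.prime_dvd_prime_iff_eq hp Nat.prime_two).mp hdvd
          exact absurd (h2 hp2) (by omega)
        · intro hdvd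
          have : p ∣ 1 := (Nat.dvd_add_right (dvd_pow_self p hap.ne')).mp (by rwa [add_comm])
          exact absurd (Nat.eq_one_of_dvd_one this) hp.one_lt.ne'
      exact (((hp.coprime_iff_not_dvd).mpr hnd).symm.pow_right k)
    · have e : ((1 + p ^ a : ℕ) : ℤ) - 1 = ((p ^ a : ℕ) : ℤ) := by push_cast; ring
      rw [e, Int.gcd_natCast_natCast]
      exact Nat.gcd_eq_left (pow_dvd_pow p hak.le)

lemma aux_key : ∀ n : ℕ, 0 < n → ∀ d : ℕ, d ∣ n → (2 ∣ n → 2 ∣ d) →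
    ∃ γ : ℤ, Int.gcd γ n = 1 ∧ Int.gcd (γ - 1) n = d := by
  intro n
  induction n using Nat.strong_induction_on with
  | _ n ih =>
    intro hn d hd h2
    rcases eq_or_lt_of_le (show 1 ≤ n from hn) with h1 | h1
    · have hn1 : n = 1 := h1.symm
      subst hn1
      have hd1 : d = 1 := Nat.eq_one_of_dvd_one hd
      subst hd1
      exact ⟨2, by simp, by simp⟩
    · set p := n.minFac with hpdef
      have hp : p.Prime := Nat.minFac_prime (by omega)
      set k := n.factorization p with hkdef
      have hk1 : 1 ≤ k := hp.factorization_pos_of_dvd (by omega) (Nat.minFac_dvd n)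
      set P := p ^ k with hPdef
      set m := n / P with hmdef
      have hnm : P * m = n := Nat.ordProj_mul_ordCompl_eq_self n p
      have hpm : ¬ p ∣ m := Nat.not_dvd_ordCompl hp (by omega)
      have hm0 : 0 < m := by
        rcases Nat.eq_zero_or_pos m with h | h
        · rw [h, mul_zero] at hnm; omega
        · exact h
      have hP2 : 2 ≤ P := by
        calc 2 ≤ p := hp.two_le
        _ ≤ p ^ k := Nat.le_self_pow (by omega) p
      have hmn : m < n := by nlinarith
      have hcop : Nat.Coprime P m :=
        Nat.Coprime.pow_left k ((hp.coprime_iff_not_dvd).mpr hpm)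
      have hd0 : d ≠ 0 := by rintro rfl; rw [zero_dvd_iff] at hd; omega
      set a := d.factorization p with hadef
      have hak : a ≤ k := (Nat.factorization_le_iff_dvd hd0 (by omega)).2 hd p
      set d₂ := d / p ^ a with hd2def
      have hdd : p ^ a * d₂ = d := Nat.ordProj_mul_ordCompl_eq_self d p
      have hpd2 : ¬ p ∣ d₂ := Nat.not_dvd_ordCompl hp hd0
      have hd2m : d₂ ∣ m := by
        have hd2n : d₂ ∣ P * m := hnm ▸ dvd_trans (Dvd.intro_left _ hdd) hd
        have hcd2P : Nat.Coprime d₂ P := ((hp.coprime_iff_not_dvd).mpr hpd2).symm.pow_right k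
        exact (Nat.Coprime.dvd_of_dvd_mul_left hcd2P hd2n)
      -- prime power witness
      have hpa : p = 2 → 1 ≤ a := by
        intro hp2
        have h2n : 2 ∣ n := hp2 ▸ Nat.minFac_dvd n
        have h2d : 2 ∣ d := h2 h2n
        exact hp.factorization_pos_of_dvd hd0 (hp2 ▸ h2d)
      obtain ⟨γ₁, hγ1, hγ1'⟩ := aux_pp hp hk1 hak hpa
      -- witness for m
      have hm2 : 2 ∣ m → 2 ∣ d₂ := by
        intro h2m
        exfalso
        have : p ≤ 2 := Nat.minFac_le_of_dvd (by norm_num) (dvd_trans h2m (Dvd.intro_left _ hnm))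
        have hp2 : p = 2 := le_antisymm this hp.two_le
        exact hpm (hp2 ▸ h2m)
      obtain ⟨γ₂, hγ2, hγ2'⟩ := ih m hmn hm0 d₂ hd2m hm2
      -- CRT via Bezout
      have hbez : IsCoprime (P : ℤ) (m : ℤ) := by
        rw [Int.isCoprime_iff_gcd_eq_one, Int.gcd_natCast_natCast]
        exact hcop
      obtain ⟨u, v, huv⟩ := hbez
      set γ : ℤ := γ₁ * (v * m) + γ₂ * (u * P) with hγdef
      have hdP : (P : ℤ) ∣ γ - γ₁ := ⟨(γ₂ - γ₁) * u, by linear_combination γ₁ * huv⟩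
      have hdm : (m : ℤ) ∣ γ - γ₂ := ⟨(γ₁ - γ₂) * v, by linear_combination γ₂ * huv⟩
      have eP : Int.gcd γ (P : ℤ) = Int.gcd γ₁ (P : ℤ) := aux_gcd_congr hdP
      have em : Int.gcd γ (m : ℤ) = Int.gcd γ₂ (m : ℤ) := aux_gcd_congr hdm
      have eP' : Int.gcd (γ - 1) (P : ℤ) = Int.gcd (γ₁ - 1) (P : ℤ) :=
        aux_gcd_congr (by simpa using hdP)
      have em' : Int.gcd (γ - 1) (m : ℤ) = Int.gcd (γ₂ - 1) (m : ℤ) :=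
        aux_gcd_congr (by simpa using hdm)
      have split : ∀ x : ℤ, Int.gcd x (n : ℤ) = Int.gcd x (P : ℤ) * Int.gcd x (m : ℤ) := by
        intro x
        rw [aux_int_gcd_nat, aux_int_gcd_nat, aux_int_gcd_nat, ← hnm, aux_gcd_mul hcop]
      refine ⟨γ, ?_, ?_⟩
      · rw [split, eP, em, hγ1, hγ2]
      · rw [split, eP', em', hγ1', hγ2', hdd]

theorem stmt3 (n : ℕ) (hn : 2 ≤ n) :
    (Odd n →
      {d : ℕ | ∃ γ : ℤ, Int.gcd γ n = 1 ∧ Int.gcd (γ - 1) n = d} = {d : ℕ | d ∣ n}) ∧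
    (Even n →
      {d : ℕ | ∃ γ : ℤ, Int.gcd γ n = 1 ∧ Int.gcd (γ - 1) n = d} =
        {d : ℕ | d ∣ n ∧ 2 ∣ d}) := by
  constructor
  · intro hodd
    ext d
    simp only [Set.mem_setOf_eq]
    constructor
    · rintro ⟨γ, h1, rfl⟩
      exact Int.ofNat_dvd.mp (Int.gcd_dvd_right _ _)
    · intro hd
      exact aux_key n (by omega) d hd (fun h2n => absurd h2n (by
        rw [Nat.odd_iff] at hodd; omega))
  · intro heven
    have h2n : 2 ∣ n := heven.two_dvd
    ext d
    simp only [Set.mem_setOf_eq]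
    constructor
    · rintro ⟨γ, h1, rfl⟩
      refine ⟨Int.ofNat_dvd.mp (Int.gcd_dvd_right _ _), ?_⟩
      have hγodd : ¬ (2:ℤ) ∣ γ := by
        intro hdvd
        have : (2:ℤ) ∣ ↑(Int.gcd γ (n:ℤ)) := Int.dvd_coe_gcd hdvd (by exact_mod_cast h2n)
        rw [h1] at this
        norm_num at this
      have hsub : (2:ℤ) ∣ γ - 1 := by omega
      have : (2:ℤ) ∣ ↑(Int.gcd (γ - 1) (n:ℤ)) := Int.dvd_coe_gcd hsub (by exact_mod_cast h2n)
      exact_mod_cast this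
    · rintro ⟨hd, h2d⟩
      exact aux_key n (by omega) d hd (fun _ => h2d)
end

section
/- Let n ≥ 1 be an integer and p a prime not dividing n. Let a be an integer with gcd(a, n) = gcd(a − 1, n) = 1 such that a has multiplicative order p modulo n. Suppose d₀, …, d_{p−1} are pairwise coprime divisors of n, with the extra condition that if p = 2 and 3 ∣ n then 3 ∣ d₀d₁. Then there exists an integer γ with gcd(γ, n) = 1 such that gcd(γ − aⁱ, n) = dᵢ for all i ∈ {0, …, p − 1}. -/
lemma myGcdModeq {x y : ℤ} {m : ℕ} (h : x ≡ y [ZMOD (m:ℤ)]) : Int.gcd x m = Int.gcd y m := by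
  have key : ∀ u v : ℤ, u ≡ v [ZMOD (m:ℤ)] → Int.gcd u m ∣ Int.gcd v m := by
    intro u v huv
    rw [← Int.natCast_dvd_natCast]
    refine Int.dvd_coe_gcd ?_ (Int.gcd_dvd_right _ _)
    have h1 : (m:ℤ) ∣ v - u := Int.ModEq.dvd huv
    have h2 := (Int.gcd_dvd_right (a := u) (b := (m:ℤ))).trans h1
    have h3 := Int.gcd_dvd_left (a := u) (b := (m:ℤ))
    simpa using dvd_add h2 h3
  exact Nat.dvd_antisymm (key x y h) (key y x h.symm)

lemma myNatGcdMul {y m k : ℕ} (h : Nat.Coprime m k) :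
    Nat.gcd y (m*k) = Nat.gcd y m * Nat.gcd y k := by
  have hg : Nat.gcd y (m*k) ∣ m * k := Nat.gcd_dvd_right _ _
  have key := (Nat.gcd_mul_gcd_eq_iff_dvd_mul_of_coprime (x := Nat.gcd y (m*k)) h).2 hg
  have e1 : Nat.gcd (Nat.gcd y (m*k)) m = Nat.gcd y m := by
    rw [Nat.gcd_assoc]
    congr 1
    simp [Nat.gcd_comm]
  have e2 : Nat.gcd (Nat.gcd y (m*k)) k = Nat.gcd y k := by
    rw [Nat.gcd_assoc]
    congr 1
    simp [Nat.gcd_comm]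
  rw [e1, e2] at key
  omega

lemma myIntGcdMul {x : ℤ} {m k : ℕ} (h : Nat.Coprime m k) :
    Int.gcd x ((m*k : ℕ) : ℤ) = Int.gcd x m * Int.gcd x k := by
  unfold Int.gcd
  simp [Int.natAbs_mul, myNatGcdMul h]

lemma myGcdPP {x : ℤ} {q e : ℕ} (hq : q.Prime) (he : 0 < e) :
    Int.gcd x ((q^e : ℕ) : ℤ) = 1 ↔ ¬ (q:ℤ) ∣ x := by
  constructor
  · intro h hdvd
    have h1 : q ∣ x.natAbs := by
      rwa [Int.natCast_dvd] at hdvd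
    have h2 : q ∣ q^e := dvd_pow_self q he.ne'
    have : q ∣ Nat.gcd x.natAbs (q^e) := Nat.dvd_gcd h1 h2
    unfold Int.gcd at h
    simp [Int.natAbs_pow] at h
    rw [h] at this
    exact hq.one_lt.ne' (Nat.eq_one_of_dvd_one this)
  · intro h
    have h1 : ¬ q ∣ x.natAbs := by rwa [Int.natCast_dvd] at h
    have : Nat.Coprime x.natAbs (q^e) :=
      Nat.Coprime.pow_right e ((hq.coprime_iff_not_dvd.2 h1).symm)
    unfold Int.gcd
    simpa [Int.natAbs_pow] using this

lemma myKeyPP (p : ℕ) (hp : p.Prime) (a : ℤ) (q e : ℕ) (hq : q.Prime) (he : 0 < e)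
    (ha : Int.gcd a ((q^e : ℕ) : ℤ) = 1) (ha1 : Int.gcd (a-1) ((q^e : ℕ) : ℤ) = 1)
    (hpow : ((q^e : ℕ) : ℤ) ∣ a^p - 1)
    (d : Fin p → ℕ) (hd : ∀ i, d i ∣ q^e)
    (hcop : ∀ i j, i ≠ j → Nat.Coprime (d i) (d j))
    (h3 : p = 2 → 3 ∣ q^e → 3 ∣ ∏ i, d i) :
    ∃ γ : ℤ, Int.gcd γ ((q^e : ℕ) : ℤ) = 1 ∧
      ∀ i : Fin p, Int.gcd (γ - a^(i:ℕ)) ((q^e : ℕ) : ℤ) = d i := by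
  classical
  haveI : Fact q.Prime := ⟨hq⟩
  haveI : NeZero q := ⟨hq.pos.ne'⟩
  have hqe : (q:ℤ) ∣ ((q^e:ℕ):ℤ) := by
    exact_mod_cast Int.natCast_dvd_natCast.2 (dvd_pow_self q he.ne')
  have hna : ¬ (q:ℤ) ∣ a := (myGcdPP hq he).1 ha
  have hna1 : ¬ (q:ℤ) ∣ (a-1) := (myGcdPP hq he).1 ha1
  set b : ZMod q := (a : ZMod q) with hb
  have hb0 : b ≠ 0 := by rw [hb, Ne, ZMod.intCast_zmod_eq_zero_iff_dvd]; exact hna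
  have hb1 : b ≠ 1 := by
    intro hh
    apply hna1
    rw [← ZMod.intCast_zmod_eq_zero_iff_dvd]
    push_cast
    rw [← hb, hh, sub_self]
  have hbp : b ^ p = 1 := by
    have h0 : ((a^p - 1 : ℤ) : ZMod q) = 0 := by
      rw [ZMod.intCast_zmod_eq_zero_iff_dvd]
      exact dvd_trans hqe hpow
    push_cast at h0
    rw [← hb, sub_eq_zero] at h0
    exact h0
  have hordb : orderOf b = p := by
    have h1 : orderOf b ∣ p := orderOf_dvd_of_pow_eq_one hbp
    rcases (Nat.dvd_prime hp).1 h1 with h | h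
    · exact absurd (orderOf_eq_one_iff.1 h) hb1
    · exact h
  have hdist : ∀ i j : ℕ, i < j → j < p → b ^ i ≠ b ^ j := by
    intro i j hij hjp heq
    have hj : b ^ i * b ^ (j - i) = b ^ i * 1 := by
      rw [mul_one, ← pow_add]
      rw [heq]
      congr 1
      omega
    have h2 := mul_left_cancel₀ (pow_ne_zero i hb0) hj
    have hdvd : p ∣ j - i := hordb ▸ orderOf_dvd_of_pow_eq_one h2
    have := Nat.le_of_dvd (by omega) hdvd
    omega
  have hdistF : ∀ i j : Fin p, i ≠ j → b ^ (i:ℕ) ≠ b ^ (j:ℕ) := by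
    intro i j hij
    rcases Nat.lt_trichotomy (i:ℕ) (j:ℕ) with h|h|h
    · exact hdist _ _ h j.isLt
    · exact absurd (Fin.ext h) hij
    · exact (hdist _ _ h i.isLt).symm
  by_cases hall : ∀ i, d i = 1
  · -- all d i = 1 : find c avoiding 0 and powers of b
    have hu : orderOf (Units.mk0 b hb0) = p := by
      rw [← orderOf_units]; exact hordb
    have hcard : p ∣ q - 1 := by
      rw [← ZMod.card_units q, ← hu]; exact orderOf_dvd_card
    have hq3 : ¬ (p = 2 ∧ q = 3) := by
      rintro ⟨hp2, hq33⟩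
      have h33 : (3:ℕ) ∣ q ^ e := by rw [hq33]; exact dvd_pow_self 3 he.ne'
      have := h3 hp2 h33
      simp [hall] at this
    have hqp : p + 2 ≤ q := by
      have h1 : p ≤ q - 1 := Nat.le_of_dvd (by have := hq.two_le; omega) hcard
      by_contra hlt
      have hq_eq : q = p + 1 := by have := hq.two_le; omega
      rcases hp.eq_two_or_odd with h2 | hodd
      · exact hq3 ⟨h2, by omega⟩
      · have h2q : 2 ∣ q := by omega
        rcases hq.eq_one_or_self_of_dvd 2 h2q with h|h
        · omega
        · have := hp.two_le; omega
    set S : Finset (ZMod q) :=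
      insert 0 (Finset.image (fun i : Fin p => b ^ (i:ℕ)) Finset.univ) with hS
    have hcardS : S.card ≤ p + 1 := by
      calc S.card ≤ (Finset.image (fun i : Fin p => b ^ (i:ℕ)) Finset.univ).card + 1 :=
            Finset.card_insert_le _ _
        _ ≤ p + 1 := by
            have := Finset.card_image_le (s := (Finset.univ : Finset (Fin p)))
              (f := fun i : Fin p => b ^ (i:ℕ))
            simp at this
            omega
    obtain ⟨c, hc⟩ : ∃ c : ZMod q, c ∉ S := by
      by_contra hcc
      push_neg at hcc
      have huniv : S = Finset.univ := Finset.eq_univ_iff_forall.2 hcc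
      have : Fintype.card (ZMod q) ≤ p + 1 := by
        rw [← Finset.card_univ, ← huniv]; exact hcardS
      rw [ZMod.card q] at this
      omega
    have hc0 : c ≠ 0 := by intro h; apply hc; rw [hS, h]; exact Finset.mem_insert_self _ _
    have hcb : ∀ i : Fin p, c ≠ b ^ (i:ℕ) := by
      intro i h
      apply hc
      rw [hS, h]
      exact Finset.mem_insert_of_mem (Finset.mem_image_of_mem _ (Finset.mem_univ i))
    refine ⟨(c.val : ℤ), ?_, ?_⟩
    · rw [myGcdPP hq he, ← ZMod.intCast_zmod_eq_zero_iff_dvd]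
      push_cast
      rw [ZMod.natCast_val, ZMod.cast_id]
      exact hc0
    · intro i
      rw [hall i]
      rw [myGcdPP hq he, ← ZMod.intCast_zmod_eq_zero_iff_dvd]
      push_cast
      rw [ZMod.natCast_val, ZMod.cast_id, ← hb, sub_eq_zero]
      exact hcb i
  · -- one exceptional index j
    push_neg at hall
    obtain ⟨j, hj⟩ := hall
    obtain ⟨v, hvle, hdj⟩ := (Nat.dvd_prime_pow hq).1 (hd j)
    have hv0 : 0 < v := by
      rcases Nat.eq_zero_or_pos v with h|h
      · rw [h, pow_zero] at hdj; exact absurd hdj hj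
      · exact h
    have hone : ∀ i, i ≠ j → d i = 1 := by
      intro i hij
      obtain ⟨w, hwle, hdi⟩ := (Nat.dvd_prime_pow hq).1 (hd i)
      rcases Nat.eq_zero_or_pos w with h|h
      · rw [hdi, h, pow_zero]
      · exfalso
        have hcij := hcop i j hij
        have : q ∣ Nat.gcd (d i) (d j) :=
          Nat.dvd_gcd (hdi ▸ dvd_pow_self q h.ne') (hdj ▸ dvd_pow_self q hv0.ne')
        rw [hcij] at this
        exact hq.one_lt.ne' (Nat.eq_one_of_dvd_one this)
    have hqv0 : ((q^v : ℕ) : ZMod q) = 0 := by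
      rw [ZMod.natCast_eq_zero_iff]
      exact dvd_pow_self q hv0.ne'
    refine ⟨a ^ (j:ℕ) + ((q^v : ℕ) : ℤ), ?_, ?_⟩
    · rw [myGcdPP hq he, ← ZMod.intCast_zmod_eq_zero_iff_dvd]
      push_cast
      push_cast at hqv0
      rw [hqv0, add_zero, ← hb]
      exact pow_ne_zero _ hb0
    · intro i
      by_cases hij : i = j
      · subst hij
        have heq : a ^ (i:ℕ) + ((q^v : ℕ) : ℤ) - a ^ (i:ℕ) = ((q^v : ℕ) : ℤ) := by ring
        rw [heq, Int.gcd_natCast_natCast, Nat.gcd_eq_left (pow_dvd_pow q hvle), hdj]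
      · rw [hone i hij]
        rw [myGcdPP hq he, ← ZMod.intCast_zmod_eq_zero_iff_dvd]
        push_cast
        push_cast at hqv0
        rw [hqv0, add_zero, ← hb, sub_eq_zero]
        exact hdistF j i (Ne.symm hij)

lemma myGcdRestrict {x : ℤ} {m k : ℕ} (hdvd : m ∣ k) (h : Int.gcd x (k:ℤ) = 1) :
    Int.gcd x (m:ℤ) = 1 := by
  unfold Int.gcd at *
  simp at h ⊢
  exact Nat.eq_one_of_dvd_one (h ▸ Nat.gcd_dvd_gcd_of_dvd_right _ hdvd)

lemma myKey (p : ℕ) (hp : p.Prime) (a : ℤ) :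
    ∀ n : ℕ, 0 < n → Int.gcd a (n:ℤ) = 1 → Int.gcd (a-1) (n:ℤ) = 1 → ((n:ℤ) ∣ a^p - 1) →
    ∀ d : Fin p → ℕ, (∀ i, d i ∣ n) → (∀ i j, i ≠ j → Nat.Coprime (d i) (d j)) →
    (p = 2 → 3 ∣ n → 3 ∣ ∏ i, d i) →
    ∃ γ : ℤ, Int.gcd γ (n:ℤ) = 1 ∧ ∀ i : Fin p, Int.gcd (γ - a^(i:ℕ)) (n:ℤ) = d i := by
  intro n
  induction n using Nat.recOnPosPrimePosCoprime with
  | prime_pow q e hq he =>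
      intro _ ha ha1 hpow d hd hcop h3
      exact myKeyPP p hp a q e hq he ha ha1 hpow d hd hcop h3
  | zero => intro h; omega
  | one =>
      intro _ _ _ _ d hd _ _
      refine ⟨0, by simp, ?_⟩
      intro i
      have h1 : d i = 1 := Nat.dvd_one.1 (hd i)
      simp [h1]
  | coprime m k hm hk cop ihm ihk =>
      intro hpos ha ha1 hpow d hd hcop h3
      have hmpos : 0 < m := by omega
      have hkpos : 0 < k := by omega
      set d1 : Fin p → ℕ := fun i => Nat.gcd (d i) m with hd1
      set d2 : Fin p → ℕ := fun i => Nat.gcd (d i) k with hd2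
      have hsplit : ∀ i, d i = d1 i * d2 i := fun i =>
        ((Nat.gcd_mul_gcd_eq_iff_dvd_mul_of_coprime cop).2 (hd i)).symm
      have hdm : (m:ℕ) ∣ m * k := dvd_mul_right m k
      have hdk : (k:ℕ) ∣ m * k := dvd_mul_left k m
      have h3' : ∀ (c : ℕ), Nat.Coprime c k → (3 ∣ ∏ i, d i) → 3 ∣ c → 3 ∣ ∏ i, d1 i := by
        intro c hck hprod h3c
        rw [Finset.prod_congr rfl (fun i _ => hsplit i), Finset.prod_mul_distrib] at hprod
        have h3p : Prime (3:ℕ) := Nat.prime_iff.1 (by norm_num)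
        rcases h3p.dvd_mul.1 hprod with h | h
        · exact h
        · exfalso
          obtain ⟨i, _, hi⟩ := (h3p.dvd_finset_prod_iff _).1 h
          have h3k : 3 ∣ k := hi.trans (Nat.gcd_dvd_right _ _)
          exact (by norm_num : ¬ (3:ℕ) ∣ 1) (hck ▸ Nat.dvd_gcd h3c h3k)
      obtain ⟨γ₁, hg1, hg1i⟩ := ihm hmpos (myGcdRestrict hdm ha) (myGcdRestrict hdm ha1)
        (dvd_trans (Int.natCast_dvd_natCast.2 hdm) hpow) d1
        (fun i => Nat.gcd_dvd_right _ _)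
        (fun i j hij => ((hcop i j hij).coprime_dvd_left (Nat.gcd_dvd_left _ _)).coprime_dvd_right
          (Nat.gcd_dvd_left _ _))
        (fun hp2 h3m => h3' m (Nat.Coprime.coprime_dvd_left dvd_rfl cop) (h3 hp2 (dvd_mul_of_dvd_left h3m k)) h3m)
      have hswap : ∀ i, d i = d2 i * d1 i := by
        intro i; rw [hsplit i, mul_comm]
      obtain ⟨γ₂, hg2, hg2i⟩ := ihk hkpos (myGcdRestrict hdk ha) (myGcdRestrict hdk ha1)
        (dvd_trans (Int.natCast_dvd_natCast.2 hdk) hpow) d2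
        (fun i => Nat.gcd_dvd_right _ _)
        (fun i j hij => ((hcop i j hij).coprime_dvd_left (Nat.gcd_dvd_left _ _)).coprime_dvd_right
          (Nat.gcd_dvd_left _ _))
        (by
          intro hp2 h3k
          -- same argument with roles of m,k swapped
          have hprod := h3 hp2 (dvd_mul_of_dvd_right h3k m)
          rw [Finset.prod_congr rfl (fun i _ => hswap i), Finset.prod_mul_distrib] at hprod
          have h3p : Prime (3:ℕ) := Nat.prime_iff.1 (by norm_num)
          rcases h3p.dvd_mul.1 hprod with h | h
          · exact h
          · exfalso
            obtain ⟨i, _, hi⟩ := (h3p.dvd_finset_prod_iff _).1 h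
            have h3m : 3 ∣ m := hi.trans (Nat.gcd_dvd_right _ _)
            exact (by norm_num : ¬ (3:ℕ) ∣ 1) (cop ▸ Nat.dvd_gcd h3m h3k))
      obtain ⟨z, hz1, hz2⟩ := Nat.chineseRemainder cop (γ₁ % m).toNat (γ₂ % k).toNat
      have hmod1 : (z:ℤ) ≡ γ₁ [ZMOD (m:ℤ)] := by
        have e1 : (z:ℤ) ≡ ((γ₁ % (m:ℤ)).toNat : ℤ) [ZMOD (m:ℤ)] := Int.natCast_modEq_iff.2 hz1
        have e2 : (((γ₁ % (m:ℤ)).toNat : ℕ) : ℤ) = γ₁ % (m:ℤ) :=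
          Int.toNat_of_nonneg (Int.emod_nonneg _ (by exact_mod_cast hmpos.ne'))
        rw [e2] at e1
        exact e1.trans (Int.emod_emod_of_dvd γ₁ dvd_rfl)
      have hmod2 : (z:ℤ) ≡ γ₂ [ZMOD (k:ℤ)] := by
        have e1 : (z:ℤ) ≡ ((γ₂ % (k:ℤ)).toNat : ℤ) [ZMOD (k:ℤ)] := Int.natCast_modEq_iff.2 hz2
        have e2 : (((γ₂ % (k:ℤ)).toNat : ℕ) : ℤ) = γ₂ % (k:ℤ) :=
          Int.toNat_of_nonneg (Int.emod_nonneg _ (by exact_mod_cast hkpos.ne'))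
        rw [e2] at e1
        exact e1.trans (Int.emod_emod_of_dvd γ₂ dvd_rfl)
      refine ⟨(z:ℤ), ?_, ?_⟩
      · rw [myIntGcdMul cop, myGcdModeq hmod1, myGcdModeq hmod2, hg1, hg2]
      · intro i
        rw [myIntGcdMul cop, myGcdModeq (hmod1.sub_right _), myGcdModeq (hmod2.sub_right _),
          hg1i i, hg2i i]
        exact (hsplit i).symm

theorem stmt8 (n : ℕ) (hn : 1 ≤ n) (p : ℕ) (hp : p.Prime) (hpn : ¬ p ∣ n)
    (a : ℤ) (ha : Int.gcd a n = 1) (ha1 : Int.gcd (a - 1) n = 1)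
    (hord : orderOf (a : ZMod n) = p)
    (d : Fin p → ℕ) (hd : ∀ i, d i ∣ n) (hdpos : ∀ i, 0 < d i)
    (hcop : ∀ i j, i ≠ j → Nat.Coprime (d i) (d j))
    (h3 : p = 2 → 3 ∣ n → 3 ∣ ∏ i, d i) :
    ∃ γ : ℤ, Int.gcd γ n = 1 ∧ ∀ i : Fin p, Int.gcd (γ - a ^ (i : ℕ)) n = d i := by
  have hpow : (n:ℤ) ∣ a^p - 1 := by
    have h1 : (a : ZMod n)^p = 1 := hord ▸ pow_orderOf_eq_one (a : ZMod n)
    have h2 : ((a^p - 1 : ℤ) : ZMod n) = 0 := by push_cast; rw [h1, sub_self]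
    exact (ZMod.intCast_zmod_eq_zero_iff_dvd _ _).1 h2
  exact myKey p hp a n hn ha ha1 hpow d hd hcop h3
end
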